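/- arXiv:2204.04882 — 6 statements merged into one kernel-verified Lean document; each statement's English description precedes it below -/
import Mathlib

section
/- Let S ⊆ ℕ^d be a good semigroup and E ⊆ S a good ideal. If α ∈ S \ E and the set Δ^E_F(α) is nonempty for some F ⊊ {1,...,d}, then the set Δ̃^E_{F̂}(α) is empty, where F̂ denotes the complement of F. -/
open Finset Set

abbrev Vec (d : ℕ) := Fin d → ℕ

/-- Axioms (G1), (G2), (G3) of a good semigroup/ideal. -/
def goodAxioms {d : ℕ} (E : Set (Vec d)) : Prop :=
  (∀ a ∈ E, ∀ b ∈ E, a ⊓ b ∈ E) ∧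
  (∀ a ∈ E, ∀ b ∈ E, a ≠ b → ∀ i : Fin d, a i = b i →
    ∃ e ∈ E, a i < e i ∧ ∀ j : Fin d, j ≠ i →
      (min (a j) (b j) ≤ e j ∧ (a j ≠ b j → e j = min (a j) (b j)))) ∧
  (∃ c ∈ E, ∀ x : Vec d, c ≤ x → x ∈ E)

def IsGoodSemigroup {d : ℕ} (S : Set (Vec d)) : Prop :=
  0 ∈ S ∧ (∀ a ∈ S, ∀ b ∈ S, a + b ∈ S) ∧ goodAxioms S

def IsGoodIdeal {d : ℕ} (S E : Set (Vec d)) : Prop :=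
  E ⊆ S ∧ (∀ a ∈ E, ∀ s ∈ S, a + s ∈ E) ∧ goodAxioms E

/-- Δ^E_F(α). -/
def DeltaF {d : ℕ} (E : Set (Vec d)) (F : Finset (Fin d)) (α : Vec d) : Set (Vec d) :=
  {β ∈ E | (∀ i ∈ F, β i = α i) ∧ ∀ j, j ∉ F → α j < β j}

/-- Δ̃^E_F(α). -/
def DeltaTildeF {d : ℕ} (E : Set (Vec d)) (F : Finset (Fin d)) (α : Vec d) : Set (Vec d) :=
  {β ∈ E | (∀ i ∈ F, β i = α i) ∧ ∀ j, j ∉ F → α j ≤ β j} \ {α}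

/-- Δ^E(α) = ∪_k Δ^E_k(α). -/
def DeltaSet {d : ℕ} (E : Set (Vec d)) (α : Vec d) : Set (Vec d) :=
  {β ∈ E | ∃ k : Fin d, β k = α k ∧ ∀ j, j ≠ k → α j < β j}

/-- α ≪ β : domination. -/
def llt {d : ℕ} (α β : Vec d) : Prop := ∀ i, α i < β i

/-- α is a complete infimum of elements of B (Δ's taken in S). -/
def IsCompleteInfIn {d : ℕ} (S B : Set (Vec d)) (α : Vec d) : Prop :=
  ∃ (r : ℕ) (β : Fin r → Vec d) (F : Fin r → Finset (Fin d)),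
    2 ≤ r ∧ r ≤ d ∧
    (∀ j, β j ∈ B ∧ (F j).Nonempty ∧ F j ≠ Finset.univ ∧ β j ∈ DeltaF S (F j) α) ∧
    (∀ j k, j ≠ k → α = β j ⊓ β k) ∧
    Finset.univ.inf F = ∅

/-- Maximal elements of A with respect to ≪. -/
def maxLL {d : ℕ} (A : Set (Vec d)) : Set (Vec d) := {α ∈ A | ∀ β ∈ A, ¬ llt α β}

/-- One step D of the canonical partition, after removing R. -/
def Dstep {d : ℕ} (S E : Set (Vec d)) (R : Set (Vec d)) : Set (Vec d) :=
  maxLL ((S \ E) \ R) \ {α | IsCompleteInfIn S (maxLL ((S \ E) \ R)) α}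

def removedUpTo {d : ℕ} (S E : Set (Vec d)) : ℕ → Set (Vec d)
  | 0 => ∅
  | n + 1 => removedUpTo S E n ∪ Dstep S E (removedUpTo S E n)

/-- D^(n) in the canonical partition (n ≥ 1). -/
def Dlevel {d : ℕ} (S E : Set (Vec d)) (n : ℕ) : Set (Vec d) :=
  Dstep S E (removedUpTo S E (n - 1))

/-- The partition of S \ E terminates after N steps. -/
def LevelsTo {d : ℕ} (S E : Set (Vec d)) (N : ℕ) : Prop :=
  (S \ E) = ⋃ i ∈ Finset.Icc 1 N, Dlevel S E i

/-- The i-th level A_i = D^(N+1-i). -/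
def Level {d : ℕ} (S E : Set (Vec d)) (N i : ℕ) : Set (Vec d) :=
  Dlevel S E (N + 1 - i)

/-- α, β consecutive in A. -/
def ConsecutiveIn {d : ℕ} (A : Set (Vec d)) (α β : Vec d) : Prop :=
  ∀ δ ∈ A, α ≤ δ → δ ≤ β → δ = α ∨ δ = β

def coeZ {d : ℕ} (x : Vec d) : Fin d → ℤ := fun i => (x i : ℤ)

/-- Δ^S_F(β) for β ∈ ℤ^d. -/
def DeltaFZ {d : ℕ} (S : Set (Vec d)) (F : Finset (Fin d)) (β : Fin d → ℤ) : Set (Vec d) :=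
  {θ ∈ S | (∀ i ∈ F, (θ i : ℤ) = β i) ∧ ∀ j, j ∉ F → β j < (θ j : ℤ)}

/-- Δ^S_k(β) for β ∈ ℤ^d. -/
def DeltaZk {d : ℕ} (S : Set (Vec d)) (k : Fin d) (β : Fin d → ℤ) : Set (Vec d) :=
  {θ ∈ S | (θ k : ℤ) = β k ∧ ∀ j, j ≠ k → β j < (θ j : ℤ)}

/-- Δ^S(β) for β ∈ ℤ^d. -/
def DeltaZ {d : ℕ} (S : Set (Vec d)) (β : Fin d → ℤ) : Set (Vec d) :=
  {θ ∈ S | ∃ k : Fin d, (θ k : ℤ) = β k ∧ ∀ j, j ≠ k → β j < (θ j : ℤ)}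

/-- α ∈ ℤ^d belongs to T ⊆ ℕ^d. -/
def memZ {d : ℕ} (T : Set (Vec d)) (α : Fin d → ℤ) : Prop := ∃ a ∈ T, coeZ a = α

/-- c is the conductor of E. -/
def IsConductor {d : ℕ} (E : Set (Vec d)) (c : Vec d) : Prop :=
  (∀ x, c ≤ x → x ∈ E) ∧ ∀ c', (∀ x, c' ≤ x → x ∈ E) → c ≤ c'

/-- A = S \ E is a symmetric complement (with γ = γ_E). -/
def SymComplement {d : ℕ} (S E : Set (Vec d)) (γ : Fin d → ℤ) (N : ℕ) : Prop :=
  Level S E N 1 = {0} ∧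
  (∀ α : Fin d → ℤ, memZ E α ↔ DeltaZ S (γ - α) = ∅) ∧
  (∀ α : Fin d → ℤ, memZ (S \ E) α ↔
    ((DeltaZ S (γ - α)).Nonempty ∧ DeltaZ S (γ - α) ⊆ S \ E))

/-- A = S \ E is well-behaved. -/
def WellBehaved {d : ℕ} (S E : Set (Vec d)) : Prop :=
  ∀ α ∈ S,
    (∃ (r : ℕ) (β : Fin r → Vec d) (G : Fin r → Finset (Fin d)),
      2 ≤ r ∧
      (∀ j, (G j).Nonempty ∧ G j ≠ Finset.univ ∧ β j ∈ DeltaTildeF S (G j) α ∧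
        DeltaTildeF S (G j) α ⊆ S \ E) ∧
      (∀ j k, j ≠ k → α = β j ⊓ β k) ∧
      Finset.univ.inf G = ∅) → α ∈ E

open scoped Classical in
/-- The level function λ of the complement of a good ideal. -/
noncomputable def levelFun {d : ℕ} (S E : Set (Vec d)) (N : ℕ) (α : Vec d) : ℕ :=
  if α ∈ S \ E then sInf {i | α ∈ Level S E N i}
  else 1 + sSup {i | ∃ θ ∈ Level S E N i, θ < α}

def proj1 {d₁ d₂ : ℕ} (x : Fin (d₁ + d₂) → ℕ) : Vec d₁ := fun i => x (Fin.castAdd d₂ i)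
def proj2 {d₁ d₂ : ℕ} (x : Fin (d₁ + d₂) → ℕ) : Vec d₂ := fun i => x (Fin.natAdd d₁ i)

/-- The product S₁ × S₂ inside ℕ^{d₁+d₂}. -/
def prodSet {d₁ d₂ : ℕ} (S₁ : Set (Vec d₁)) (S₂ : Set (Vec d₂)) :
    Set (Fin (d₁ + d₂) → ℕ) :=
  {x | proj1 x ∈ S₁ ∧ proj2 x ∈ S₂}

def IsNumericalSemigroup (T : Set ℕ) : Prop :=
  0 ∈ T ∧ (∀ a ∈ T, ∀ b ∈ T, a + b ∈ T) ∧ ∃ c, ∀ x, c ≤ x → x ∈ T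

/-- The Apéry set of a numerical semigroup T with respect to w. -/
def AperyN (T : Set ℕ) (w : ℕ) : Set ℕ := {t ∈ T | ¬ ∃ s ∈ T, t = w + s}


theorem stmt1 {d : ℕ} (S E : Set (Vec d)) (hS : IsGoodSemigroup S)
    (hE : IsGoodIdeal S E) (α : Vec d) (hα : α ∈ S \ E)
    (F : Finset (Fin d)) (hF : F ≠ Finset.univ)
    (hne : (DeltaF E F α).Nonempty) :
    DeltaTildeF E Fᶜ α = ∅ := by
  obtain ⟨β, hβE, hβF, hβout⟩ := hne
  ext δ
  simp only [Set.mem_empty_iff_false, iff_false]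
  rintro ⟨⟨hδE, hδFc, hδF⟩, hδne⟩
  apply hα.2
  have hinf : β ⊓ δ = α := by
    funext i
    by_cases hi : i ∈ F
    · have h1 : β i = α i := hβF i hi
      have h2 : α i ≤ δ i := hδF i (by simpa using hi)
      simp [Pi.inf_apply, h1, min_eq_left h2]
    · have h1 : α i < β i := hβout i hi
      have h2 : δ i = α i := hδFc i (by simpa using hi)
      simp [Pi.inf_apply, h2, min_eq_right h1.le]
  have := hE.2.2.1 β hβE δ hδE
  rwa [hinf] at this
end

section
/- Let S ⊆ ℕ^d be a good semigroup and E ⊆ S a good ideal. Let α ∈ E, β ∈ Δ^E_F(α), and θ ∈ Δ^E_G(α). If F ∪ G ⊊ {1,...,d} then β ∧ θ ∈ Δ^E_{F∪G}(α), while if F ∪ G = {1,...,d} then β ∧ θ = α. -/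
open Finset Set

theorem stmt2 {d : ℕ} (S E : Set (Vec d)) (hS : IsGoodSemigroup S)
    (hE : IsGoodIdeal S E) (α : Vec d) (hα : α ∈ E)
    (F G : Finset (Fin d)) (β θ : Vec d)
    (hβ : β ∈ DeltaF E F α) (hθ : θ ∈ DeltaF E G α) :
    (F ∪ G ≠ Finset.univ → β ⊓ θ ∈ DeltaF E (F ∪ G) α) ∧
    (F ∪ G = Finset.univ → β ⊓ θ = α) := by
  obtain ⟨hβE, hβF, hβF'⟩ := hβ
  obtain ⟨hθE, hθG, hθG'⟩ := hθ
  have hmemE : β ⊓ θ ∈ E := hE.2.2.1 β hβE θ hθE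
  have key : ∀ i ∈ F ∪ G, (β ⊓ θ) i = α i := by
    intro i hi
    rcases Finset.mem_union.mp hi with h | h
    · have h1 : β i = α i := hβF i h
      have h2 : α i ≤ θ i := by
        by_cases hG : i ∈ G
        · exact (hθG i hG).ge
        · exact (hθG' i hG).le
      simp [Pi.inf_apply, h1, min_eq_left h2]
    · have h1 : θ i = α i := hθG i h
      have h2 : α i ≤ β i := by
        by_cases hF : i ∈ F
        · exact (hβF i hF).ge
        · exact (hβF' i hF).le
      simp [Pi.inf_apply, h1, min_eq_right h2]
  constructor
  · intro _
    refine ⟨hmemE, key, ?_⟩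
    intro j hj
    rw [Finset.mem_union, not_or] at hj
    exact lt_min (hβF' j hj.1) (hθG' j hj.2)
  · intro huniv
    funext i
    exact key i (huniv ▸ Finset.mem_univ i)
end

section
/- Let S ⊆ ℕ^d be a good semigroup and A = A_1 ∪ ... ∪ A_N the partition in levels of the complement of a good ideal E ⊆ S. Let α ∈ ℕ^d and suppose Δ^S(α) is nonempty and contained in A. Then all the minimal elements of Δ^S(α) lie in the same level A_i. -/
open Finset Set

section Dev

open scoped Classical

variable {d : ℕ} {S E : Set (Vec d)}

lemma removed_mono (hmn : m ≤ n) : removedUpTo S E m ⊆ removedUpTo S E n := by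
  induction n with
  | zero =>
      have : m = 0 := by omega
      subst this; exact fun x hx => hx
  | succ n ih =>
      rcases Nat.lt_or_ge m (n+1) with h | h
      · intro x hx
        exact Set.mem_union_left _ (ih (by omega) hx)
      · have : m = n + 1 := le_antisymm hmn h
        subst this; exact fun x hx => hx

lemma mem_removed {x : Vec d} :
    x ∈ removedUpTo S E n ↔ ∃ m, m < n ∧ x ∈ Dstep S E (removedUpTo S E m) := by
  induction n with
  | zero => simp [removedUpTo]
  | succ n ih =>
      constructor
      · intro hx
        rcases hx with hx | hx
        · obtain ⟨m, hm, h⟩ := ih.mp hx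
          exact ⟨m, by omega, h⟩
        · exact ⟨n, by omega, hx⟩
      · rintro ⟨m, hm, h⟩
        rcases Nat.lt_or_ge m n with h' | h'
        · exact Set.mem_union_left _ (ih.mpr ⟨m, h', h⟩)
        · have : m = n := by omega
          subst this
          exact Set.mem_union_right _ h

lemma Dstep_subset {R : Set (Vec d)} : Dstep S E R ⊆ (S \ E) \ R :=
  fun x hx => hx.1.1

lemma exists_least (T : Set (Vec d)) (hne : T.Nonempty)
    (hcl : ∀ a ∈ T, ∀ b ∈ T, a ⊓ b ∈ T) : ∃ w ∈ T, ∀ x ∈ T, w ≤ x := by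
  classical
  set f : Vec d → ℕ := fun x => ∑ l, x l with hf
  have hne' : (f '' T).Nonempty := hne.image f
  obtain ⟨x0, hx0T, hfx0⟩ := Nat.sInf_mem hne'
  refine ⟨x0, hx0T, ?_⟩
  intro x hx
  have hzT := hcl x0 hx0T x hx
  have h1 : ∀ l, (x0 ⊓ x) l ≤ x0 l := fun l => inf_le_left
  have heq : ∀ l, (x0 ⊓ x) l = x0 l := by
    by_contra hc
    push_neg at hc
    obtain ⟨l, hl⟩ := hc
    have hlt : (x0 ⊓ x) l < x0 l := lt_of_le_of_ne (h1 l) hl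
    have hsum : f (x0 ⊓ x) < f x0 :=
      Finset.sum_lt_sum (fun i _ => h1 i) ⟨l, Finset.mem_univ l, hlt⟩
    have : f x0 ≤ f (x0 ⊓ x) := by
      rw [hfx0]
      exact Nat.sInf_le ⟨x0 ⊓ x, hzT, rfl⟩
    omega
  intro l
  calc x0 l = (x0 ⊓ x) l := (heq l).symm
    _ ≤ x l := inf_le_right

lemma G2aux (hS : IsGoodSemigroup S) {β a b : Vec d} (ha : a ∈ S) (hb : b ∈ S)
    (hne : a ≠ b) (i : Fin d) (hi : a i = b i)
    (hmin : ∀ j, min (a j) (b j) = β j) :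
    ∃ e ∈ S, β ≤ e ∧ β i < e i ∧ ∀ j, a j ≠ b j → e j = β j := by
  obtain ⟨e, heS, hei, hj⟩ := hS.2.2.2.1 a ha b hb hne i hi
  have hβi : β i = a i := by rw [← hmin i, hi, min_self]
  refine ⟨e, heS, ?_, ?_, ?_⟩
  · intro j
    by_cases h : j = i
    · subst h; rw [hβi]; exact hei.le
    · rw [← hmin j]; exact (hj j h).1
  · rw [hβi]; exact hei
  · intro j hne2
    have hji : j ≠ i := fun h => hne2 (h ▸ hi)
    rw [(hj j hji).2 hne2, hmin j]

lemma L1 (hS : IsGoodSemigroup S) :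
    ∀ (m : ℕ) (β θ : Vec d) (k : Fin d),
      (∀ x ∈ S, β ≤ x → x k = β k → x ∈ S \ E) →
      θ ∈ (S \ E) \ removedUpTo S E m →
      β ≤ θ → β k < θ k →
      β ∉ Dstep S E (removedUpTo S E m) := by
  intro m
  induction m using Nat.strong_induction_on with
  | _ m IH =>
  intro β θ k hProt hθ hβθ hβθk hβD
  classical
  have hmax : β ∈ maxLL ((S \ E) \ removedUpTo S E m) := hβD.1
  have hnCI : ¬ IsCompleteInfIn S (maxLL ((S \ E) \ removedUpTo S E m)) β := hβD.2
  have hβA : β ∈ (S \ E) \ removedUpTo S E m := hmax.1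
  have hβS : β ∈ S := hβA.1.1
  have hθS : θ ∈ S := hθ.1.1
  have hθβ : β ≠ θ := fun h => absurd hβθk (by rw [h]; exact lt_irrefl _)
  have hθkβ : θ k ≠ β k := ne_of_gt hβθk
  have hminβθ : ∀ j, min (β j) (θ j) = β j := fun j => min_eq_left (hβθ j)
  have HJ : ∃ i, θ i = β i := by
    by_contra hc
    push_neg at hc
    exact hmax.2 θ hθ (fun l => lt_of_le_of_ne (hβθ l) (fun h => hc l h.symm))
  -- least witnesses
  have hLleast : ∀ i : Fin d, ∃ wi : Vec d, θ i = β i →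
      ((wi ∈ S ∧ β ≤ wi ∧ β i < wi i) ∧
       (∀ x, x ∈ S → β ≤ x → β i < x i → wi ≤ x) ∧
       (∀ l, θ l ≠ β l → wi l = β l)) := by
    intro i
    by_cases hi : θ i = β i
    · obtain ⟨e, heS, hβe, hei, heoff⟩ := G2aux hS hβS hθS hθβ i hi.symm hminβθ
      set T := {x : Vec d | x ∈ S ∧ β ≤ x ∧ β i < x i} with hT
      have hne : T.Nonempty := ⟨e, heS, hβe, hei⟩
      have hcl : ∀ a ∈ T, ∀ b ∈ T, a ⊓ b ∈ T := by
        rintro a ⟨haS, hβa, hai⟩ b ⟨hbS, hβb, hbi⟩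
        refine ⟨hS.2.2.1 a haS b hbS, le_inf hβa hβb, ?_⟩
        have : (a ⊓ b) i = a i ⊓ b i := rfl
        rw [this]
        exact lt_inf_iff.mpr ⟨hai, hbi⟩
      obtain ⟨w0, hw0T, hw0least⟩ := exists_least T hne hcl
      refine ⟨w0, fun _ => ⟨hw0T, fun x h1 h2 h3 => hw0least x ⟨h1, h2, h3⟩, ?_⟩⟩
      intro l hl
      have h1 : w0 l ≤ e l := hw0least e ⟨heS, hβe, hei⟩ l
      have h2 : e l = β l := heoff l (fun h => hl h.symm)
      exact le_antisymm (h2 ▸ h1) (hw0T.2.1 l)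
    · exact ⟨β, fun h => absurd h hi⟩
  choose w hw using hLleast
  have hwS : ∀ i, θ i = β i → w i ∈ S := fun i hi => (hw i hi).1.1
  have hβw : ∀ i, θ i = β i → β ≤ w i := fun i hi => (hw i hi).1.2.1
  have hwii : ∀ i, θ i = β i → β i < w i i := fun i hi => (hw i hi).1.2.2
  have hwleast : ∀ i, θ i = β i → ∀ x, x ∈ S → β ≤ x → β i < x i → w i ≤ x :=
    fun i hi => (hw i hi).2.1
  have hwoff : ∀ i, θ i = β i → ∀ l, θ l ≠ β l → w i l = β l := fun i hi => (hw i hi).2.2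
  have hwk : ∀ i, θ i = β i → w i k = β k := fun i hi => hwoff i hi k hθkβ
  have hProtw : ∀ i, θ i = β i → ∀ x ∈ S, w i ≤ x → x k = w i k → x ∈ S \ E := by
    intro i hi x hxS hle hk
    exact hProt x hxS (le_trans (hβw i hi) hle) (by rw [hk, hwk i hi])
  -- aliveness of least witnesses
  have halive : ∀ i, θ i = β i → w i ∉ removedUpTo S E m := by
    intro i hi hmem
    rw [mem_removed] at hmem
    obtain ⟨m', hm'm, hwD⟩ := hmem
    have hθm' : θ ∈ (S \ E) \ removedUpTo S E m' :=
      ⟨hθ.1, fun h => hθ.2 (removed_mono (le_of_lt hm'm) h)⟩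
    have hθnD : θ ∉ Dstep S E (removedUpTo S E m') := by
      intro h
      exact hθ.2 (mem_removed.mpr ⟨m', hm'm, h⟩)
    by_cases hmx : θ ∈ maxLL ((S \ E) \ removedUpTo S E m')
    · have hθCI : IsCompleteInfIn S (maxLL ((S \ E) \ removedUpTo S E m')) θ := by
        by_contra hc
        exact hθnD ⟨hmx, hc⟩
      obtain ⟨r, βs, F, hr2, hrd, hall, hpair, hinfF⟩ := hθCI
      have hq1 : ∃ q1, i ∉ F q1 := by
        by_contra hc
        push_neg at hc
        have h1 : ({i} : Finset (Fin d)) ≤ Finset.univ.inf F :=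
          Finset.le_inf (fun q _ => Finset.singleton_subset_iff.mpr (hc q))
        rw [hinfF] at h1
        exact absurd (h1 (Finset.mem_singleton_self i)) (Finset.notMem_empty i)
      obtain ⟨q1, hq1⟩ := hq1
      obtain ⟨htmax, hFne, hFnu, htΔ⟩ := hall q1
      have htS : βs q1 ∈ S := htΔ.1
      have hteq : ∀ l ∈ F q1, βs q1 l = θ l := htΔ.2.1
      have htlt : ∀ l, l ∉ F q1 → θ l < βs q1 l := htΔ.2.2
      have hθt : θ ≤ βs q1 := by
        intro l
        by_cases h : l ∈ F q1
        · rw [hteq l h]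
        · exact (htlt l h).le
      have htB : βs q1 ∈ (S \ E) \ removedUpTo S E m' := htmax.1
      have h1 : w i ≤ βs q1 :=
        hwleast i hi (βs q1) htS (le_trans hβθ hθt) (by rw [← hi]; exact htlt i hq1)
      have h2 : w i k < βs q1 k := by
        rw [hwk i hi]
        exact lt_of_lt_of_le hβθk (hθt k)
      exact IH m' hm'm (w i) (βs q1) k (hProtw i hi) htB h1 h2 hwD
    · have hz : ∃ z ∈ (S \ E) \ removedUpTo S E m', llt θ z := by
        by_contra hc
        push_neg at hc
        exact hmx ⟨hθm', hc⟩
      obtain ⟨z, hzB, hzllt⟩ := hz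
      have hzS : z ∈ S := hzB.1.1
      have hβz : β ≤ z := fun l => le_trans (hβθ l) (hzllt l).le
      have h1 : w i ≤ z :=
        hwleast i hi z hzS hβz (by rw [← hi]; exact hzllt i)
      have h2 : w i k < z k := by
        rw [hwk i hi]
        exact lt_trans hβθk (hzllt k)
      exact IH m' hm'm (w i) z k (hProtw i hi) hzB h1 h2 hwD
  have hwB : ∀ i, θ i = β i → w i ∈ (S \ E) \ removedUpTo S E m := by
    intro i hi
    exact ⟨hProt (w i) (hwS i hi) (hβw i hi) (hwk i hi), halive i hi⟩
  have hwmax : ∀ i, θ i = β i → w i ∈ maxLL ((S \ E) \ removedUpTo S E m) := by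
    intro i hi
    refine ⟨hwB i hi, ?_⟩
    intro z hz hllt
    exact hmax.2 z hz (fun l => lt_of_le_of_lt (hβw i hi l) (hllt l))
  -- strict sets
  set U : Fin d → Finset (Fin d) :=
    fun i => Finset.univ.filter (fun l => β l < w i l) with hU
  have hUmem : ∀ i l, l ∈ U i ↔ β l < w i l := by
    intro i l; simp [hU]
  have hiU : ∀ i, θ i = β i → i ∈ U i := fun i hi => (hUmem i i).mpr (hwii i hi)
  have hUJ : ∀ i, θ i = β i → ∀ l, l ∈ U i → θ l = β l := by
    intro i hi l hl
    by_contra hc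
    exact absurd ((hUmem i l).mp hl) (by rw [hwoff i hi l hc]; exact lt_irrefl _)
  have hUk : ∀ i, θ i = β i → k ∉ U i := by
    intro i hi hk
    exact absurd ((hUmem i k).mp hk) (by rw [hwk i hi]; exact lt_irrefl _)
  have hwoffU : ∀ i, θ i = β i → ∀ l, l ∉ U i → w i l = β l := by
    intro i hi l hl
    exact le_antisymm (not_lt.mp (fun h => hl ((hUmem i l).mpr h))) (hβw i hi l)
  have hminwθ : ∀ i, θ i = β i → ∀ j, min (w i j) (θ j) = β j := by
    intro i hi j
    by_cases h : θ j = β j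
    · rw [h]; exact min_eq_right (hβw i hi j)
    · rw [hwoff i hi j h]; exact min_eq_left (hβθ j)
  -- disjointness
  have hdisj : ∀ i, θ i = β i → ∀ l, θ l = β l → l ∉ U i →
      ∀ x, x ∈ U l → x ∉ U i := by
    intro i hi l hl hlU x hxl hxi
    have hwθ : w i ≠ θ := fun h =>
      absurd (hwk i hi) (by rw [h]; exact hθkβ)
    have hagree : w i l = θ l := by rw [hwoffU i hi l hlU, hl]
    obtain ⟨e2, he2S, hβe2, he2l, he2off⟩ :=
      G2aux hS (hwS i hi) hθS hwθ l hagree (hminwθ i hi)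
    have hwle : w l ≤ e2 := hwleast l hl e2 he2S hβe2 he2l
    have hθx : θ x = β x := hUJ i hi x hxi
    have hne2 : w i x ≠ θ x := by rw [hθx]; exact ne_of_gt ((hUmem i x).mp hxi)
    have he2x : e2 x = β x := he2off x hne2
    have : w l x ≤ β x := he2x ▸ hwle x
    exact absurd ((hUmem l x).mp hxl) (not_lt.mpr this)
  have hUsub : ∀ i, θ i = β i → ∀ l, θ l = β l → l ∈ U i → U l ⊆ U i := by
    intro i hi l hl hlU x hx
    have h1 : w l ≤ w i := hwleast l hl (w i) (hwS i hi) (hβw i hi) ((hUmem i l).mp hlU)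
    exact (hUmem i x).mpr (lt_of_lt_of_le ((hUmem l x).mp hx) (h1 x))
  have hUeq : ∀ i, θ i = β i → ∀ x, θ x = β x → x ∈ U i → U x = U i := by
    intro i hi x hx hxU
    have h2 : i ∈ U x := by
      by_contra hc
      exact hdisj x hx i hi hc x hxU (hiU x hx)
    exact Finset.Subset.antisymm (hUsub i hi x hx hxU) (hUsub x hx i hi h2)
  -- representatives
  set REP : Finset (Fin d) :=
    Finset.univ.filter (fun i => θ i = β i ∧ ∀ j ∈ U i, i ≤ j) with hREP
  have hREPmem : ∀ i, i ∈ REP ↔ (θ i = β i ∧ ∀ j ∈ U i, i ≤ j) := by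
    intro i; simp [hREP]
  have hcover : ∀ l, θ l = β l → ∃ i, i ∈ REP ∧ l ∈ U i := by
    intro l hl
    have hlU : l ∈ U l := hiU l hl
    have hUne : (U l).Nonempty := ⟨l, hlU⟩
    set μ := (U l).min' hUne with hμdef
    have hμU : μ ∈ U l := Finset.min'_mem _ _
    have hμJ : θ μ = β μ := hUJ l hl μ hμU
    have hUμ : U μ = U l := hUeq l hl μ hμJ hμU
    refine ⟨μ, (hREPmem μ).mpr ⟨hμJ, ?_⟩, by rw [hUμ]; exact hlU⟩
    intro j hj
    rw [hUμ] at hj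
    exact Finset.min'_le _ _ hj
  have hrepdisj : ∀ i ∈ REP, ∀ l ∈ REP, i ≠ l → ∀ x, x ∈ U i → x ∉ U l := by
    intro i hiR l hlR hil x hxi hxl
    obtain ⟨hi, hmini⟩ := (hREPmem i).mp hiR
    obtain ⟨hl, hminl⟩ := (hREPmem l).mp hlR
    have hx : θ x = β x := hUJ i hi x hxi
    have e1 : U x = U i := hUeq i hi x hx hxi
    have e2 : U x = U l := hUeq l hl x hx hxl
    have e3 : U i = U l := e1 ▸ e2
    have h1 : i ≤ l := hmini l (by rw [e3]; exact hiU l hl)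
    have h2 : l ≤ i := hminl i (by rw [← e3]; exact hiU i hi)
    exact hil (le_antisymm h1 h2)
  -- assemble the complete infimum certificate
  obtain ⟨i0, hi0⟩ := HJ
  have hREPne : REP.Nonempty := by
    obtain ⟨μ, hμR, _⟩ := hcover i0 hi0
    exact ⟨μ, hμR⟩
  set J : Finset (Fin d) := Finset.univ.filter (fun l => θ l = β l) with hJdef
  have hJmem : ∀ l, l ∈ J ↔ θ l = β l := by intro l; simp [hJdef]
  set eqv := REP.equivFin with heqv
  set rr := REP.card + 1 with hrr
  set βs : Fin rr → Vec d := Fin.cons θ (fun q => w (eqv.symm q).1) with hβs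
  set F : Fin rr → Finset (Fin d) := Fin.cons J (fun q => (U (eqv.symm q).1)ᶜ) with hF
  have hrepθ : ∀ q : Fin REP.card, θ (eqv.symm q).1 = β (eqv.symm q).1 :=
    fun q => ((hREPmem _).mp (eqv.symm q).2).1
  have hd : 0 < d := Fin.pos k
  apply hnCI
  refine ⟨rr, βs, F, ?_, ?_, ?_, ?_, ?_⟩
  · have : 0 < REP.card := Finset.card_pos.mpr hREPne
    omega
  · have h1 : REP ⊆ Finset.univ.erase k := by
      intro i hiR
      exact Finset.mem_erase.mpr
        ⟨fun h => hθkβ (h ▸ ((hREPmem i).mp hiR).1), Finset.mem_univ i⟩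
    have h2 : REP.card ≤ (Finset.univ.erase k).card := Finset.card_le_card h1
    have h3 : (Finset.univ.erase k).card = d - 1 := by
      rw [Finset.card_erase_of_mem (Finset.mem_univ k), Finset.card_univ, Fintype.card_fin]
    omega
  · intro j
    refine Fin.cases ?_ ?_ j
    · constructor
      · refine ⟨hθ, ?_⟩
        intro z hz hllt
        exact hmax.2 z hz (fun l => lt_of_le_of_lt (hβθ l) (hllt l))
      refine ⟨⟨i0, (hJmem i0).mpr hi0⟩, ?_, ?_⟩
      · intro h
        have hk' : k ∈ F (0 : Fin rr) := by rw [h]; exact Finset.mem_univ k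
        rw [hF] at hk'
        simp only [Fin.cons_zero] at hk'
        exact hθkβ ((hJmem k).mp hk')
      · refine ⟨hθS, ?_, ?_⟩
        · intro l hl
          exact (hJmem l).mp hl
        · intro l hl
          exact lt_of_le_of_ne (hβθ l) (fun h => hl ((hJmem l).mpr h.symm))
    · intro q
      have hi : θ (eqv.symm q).1 = β (eqv.symm q).1 := hrepθ q
      constructor
      · exact hwmax _ hi
      refine ⟨⟨k, Finset.mem_compl.mpr (hUk _ hi)⟩, ?_, ?_⟩
      · intro h
        have hk' : (eqv.symm q).1 ∈ F q.succ := by rw [h]; exact Finset.mem_univ _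
        rw [hF] at hk'
        simp only [Fin.cons_succ] at hk'
        exact absurd (hiU _ hi) (Finset.mem_compl.mp hk')
      · refine ⟨hwS _ hi, ?_, ?_⟩
        · intro l hl
          exact hwoffU _ hi l (Finset.mem_compl.mp hl)
        · intro l hl
          rw [hF] at hl
          simp only [Fin.cons_succ, Finset.mem_compl, not_not] at hl
          exact (hUmem _ l).mp hl
  · -- pairwise infima
    have key : ∀ j j' : Fin rr, j ≠ j' → ∀ l, β l = min (βs j l) (βs j' l) := by
      intro j j' hjj' l
      rcases Fin.eq_zero_or_eq_succ j with rfl | ⟨q, rfl⟩ <;>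
        rcases Fin.eq_zero_or_eq_succ j' with rfl | ⟨q', rfl⟩
      · exact absurd rfl hjj'
      · rw [hβs]
        simp only [Fin.cons_zero, Fin.cons_succ]
        rw [min_comm]
        exact (hminwθ _ (hrepθ q') l).symm
      · rw [hβs]
        simp only [Fin.cons_zero, Fin.cons_succ]
        exact (hminwθ _ (hrepθ q) l).symm
      · rw [hβs]
        simp only [Fin.cons_succ]
        have hqq' : q ≠ q' := fun h => hjj' (by rw [h])
        have hii' : (eqv.symm q).1 ≠ (eqv.symm q').1 := by
          intro h
          exact hqq' (by
            have := congrArg eqv (Subtype.ext h : eqv.symm q = eqv.symm q')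
            simpa using this)
        by_cases hlq : l ∈ U (eqv.symm q).1
        · have hnl : l ∉ U (eqv.symm q').1 :=
            hrepdisj _ (eqv.symm q).2 _ (eqv.symm q').2 hii' l hlq
          rw [hwoffU _ (hrepθ q') l hnl]
          exact (min_eq_right (hβw _ (hrepθ q) l)).symm
        · rw [hwoffU _ (hrepθ q) l hlq]
          exact (min_eq_left (hβw _ (hrepθ q') l)).symm
    intro j j' hjj'
    funext l
    have : (βs j ⊓ βs j') l = min (βs j l) (βs j' l) := rfl
    rw [this]
    exact key j j' hjj' l
  · -- inf of F is empty
    apply Finset.eq_empty_of_forall_notMem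
    intro x hx
    have hmem : ∀ j : Fin rr, x ∈ F j := by
      intro j
      exact Finset.le_iff_subset.mp (Finset.inf_le (Finset.mem_univ j)) hx
    have hx0 : x ∈ J := hmem 0
    have hxθ : θ x = β x := (hJmem x).mp hx0
    obtain ⟨μ, hμR, hxμ⟩ := hcover x hxθ
    set q := eqv ⟨μ, hμR⟩ with hq
    have : x ∈ F q.succ := hmem q.succ
    have hFq : F q.succ = (U (eqv.symm q).1)ᶜ := rfl
    rw [hFq] at this
    have : x ∉ U (eqv.symm q).1 := Finset.mem_compl.mp this
    rw [hq] at this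
    rw [Equiv.symm_apply_apply] at this
    exact this hxμ


lemma stage_unique {a b : ℕ} {x : Vec d}
    (ha : x ∈ Dstep S E (removedUpTo S E a))
    (hb : x ∈ Dstep S E (removedUpTo S E b)) : a = b := by
  by_contra hne
  rcases Nat.lt_or_ge a b with h | h
  · exact (Dstep_subset hb).2 (mem_removed.mpr ⟨a, h, ha⟩)
  · have h' : b < a := by omega
    exact (Dstep_subset ha).2 (mem_removed.mpr ⟨b, h', hb⟩)

lemma sync (hS : IsGoodSemigroup S) {α : Vec d} (hsub : DeltaSet S α ⊆ S \ E)
    {β1 β2 : Vec d} (hβ1 : β1 ∈ DeltaSet S α)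
    (hmin1 : ∀ x ∈ DeltaSet S α, ¬ x < β1)
    (hβ2 : β2 ∈ DeltaSet S α) (m : ℕ)
    (hD1 : β1 ∈ Dstep S E (removedUpTo S E m))
    (h2 : β2 ∈ (S \ E) \ removedUpTo S E m) :
    β2 ∈ Dstep S E (removedUpTo S E m) := by
  classical
  obtain ⟨hβ1S, k1, hk1eq, hk1lt⟩ := hβ1
  obtain ⟨hβ2S, k2, hk2eq, hk2lt⟩ := hβ2
  have hαβ2 : α ≤ β2 := by
    intro j
    by_cases h : j = k2
    · subst h; rw [hk2eq]
    · exact (hk2lt j h).le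
  have hProt : ∀ x ∈ S, β1 ≤ x → x k1 = β1 k1 → x ∈ S \ E := by
    intro x hxS hle hk
    exact hsub ⟨hxS, k1, by rw [hk, hk1eq],
      fun j hj => lt_of_lt_of_le (hk1lt j hj) (hle j)⟩
  have hkey : ∀ v, v ∈ S → (∀ j, j ≠ k1 → α j < v j) → α k1 < v k1 → β1 ≤ v := by
    intro v hvS hvj hvk
    have hζS : β1 ⊓ v ∈ S := hS.2.2.1 β1 hβ1S v hvS
    have hζΔ : β1 ⊓ v ∈ DeltaSet S α := by
      refine ⟨hζS, k1, ?_, ?_⟩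
      · show min (β1 k1) (v k1) = α k1
        rw [hk1eq]
        exact min_eq_left hvk.le
      · intro j hj
        exact lt_min (hk1lt j hj) (hvj j hj)
    have hle : β1 ⊓ v ≤ β1 := inf_le_left
    have heq : β1 ⊓ v = β1 := by
      by_contra hne
      exact hmin1 _ hζΔ (lt_of_le_of_ne hle hne)
    calc β1 = β1 ⊓ v := heq.symm
      _ ≤ v := inf_le_right
  constructor
  · refine ⟨h2, ?_⟩
    intro z hz hllt
    have hzS : z ∈ S := hz.1.1
    have ha1 : ∀ j, j ≠ k1 → α j < z j := fun j _ => lt_of_le_of_lt (hαβ2 j) (hllt j)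
    have ha2 : α k1 < z k1 := lt_of_le_of_lt (hαβ2 k1) (hllt k1)
    have hle : β1 ≤ z := hkey z hzS ha1 ha2
    have hltk : β1 k1 < z k1 := by rw [hk1eq]; exact ha2
    exact (L1 hS m β1 z k1 hProt hz hle hltk) hD1
  · intro hCI
    obtain ⟨r, βs, F, hr2, hrd, hall, hpair, hinfF⟩ := hCI
    have hq : ∃ q, k2 ∉ F q := by
      by_contra hc
      push_neg at hc
      have h1 : ({k2} : Finset (Fin d)) ≤ Finset.univ.inf F :=
        Finset.le_inf (fun q _ => Finset.singleton_subset_iff.mpr (hc q))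
      rw [hinfF] at h1
      exact absurd (h1 (Finset.mem_singleton_self k2)) (Finset.notMem_empty k2)
    obtain ⟨q0, hq0⟩ := hq
    obtain ⟨hvmax, _, _, hvΔ⟩ := hall q0
    have hvS : βs q0 ∈ S := hvΔ.1
    have hβ2v : β2 ≤ βs q0 := by
      intro l
      by_cases h : l ∈ F q0
      · rw [hvΔ.2.1 l h]
      · exact (hvΔ.2.2 l h).le
    have hvk2 : β2 k2 < βs q0 k2 := hvΔ.2.2 k2 hq0
    have hvj : ∀ j, j ≠ k1 → α j < βs q0 j := by
      intro j hj
      by_cases h : j = k2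
      · subst h; rw [← hk2eq]; exact hvk2
      · exact lt_of_lt_of_le (hk2lt j h) (hβ2v j)
    have hvk1 : α k1 < βs q0 k1 := by
      by_cases h : k1 = k2
      · subst h; rw [← hk2eq]; exact hvk2
      · exact lt_of_lt_of_le (hk2lt k1 h) (hβ2v k1)
    have hle : β1 ≤ βs q0 := hkey (βs q0) hvS hvj hvk1
    have hltk : β1 k1 < βs q0 k1 := by rw [hk1eq]; exact hvk1
    exact (L1 hS m β1 (βs q0) k1 hProt hvmax.1 hle hltk) hD1

end Dev

theorem stmt5 {d : ℕ} (S E : Set (Vec d)) (hS : IsGoodSemigroup S)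
    (hE : IsGoodIdeal S E) (N : ℕ) (hN : LevelsTo S E N)
    (α : Vec d) (hne : (DeltaSet S α).Nonempty)
    (hsub : DeltaSet S α ⊆ S \ E) :
    ∃ i : ℕ, ∀ β ∈ DeltaSet S α,
      (∀ x ∈ DeltaSet S α, ¬ x < β) → β ∈ Level S E N i := by
  classical
  by_cases hex : ∃ β0, β0 ∈ DeltaSet S α ∧ ∀ x ∈ DeltaSet S α, ¬ x < β0
  · obtain ⟨β0, hβ0, hm0⟩ := hex
    have hA0 : β0 ∈ S \ E := hsub hβ0
    have hlvl0 : ∃ i0, (1 ≤ i0 ∧ i0 ≤ N) ∧ β0 ∈ Dlevel S E i0 := by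
      have := hN ▸ hA0
      rw [Set.mem_iUnion₂] at this
      obtain ⟨i0, hi0, h⟩ := this
      exact ⟨i0, Finset.mem_Icc.mp hi0, h⟩
    obtain ⟨i0, ⟨hi01, hi0N⟩, h0lvl⟩ := hlvl0
    refine ⟨N + 1 - i0, ?_⟩
    intro β hβ hmβ
    have hAβ : β ∈ S \ E := hsub hβ
    have hlvlβ : ∃ i, (1 ≤ i ∧ i ≤ N) ∧ β ∈ Dlevel S E i := by
      have := hN ▸ hAβ
      rw [Set.mem_iUnion₂] at this
      obtain ⟨i, hi, h⟩ := this
      exact ⟨i, Finset.mem_Icc.mp hi, h⟩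
    obtain ⟨i, ⟨hi1, hiN⟩, hlvl⟩ := hlvlβ
    have hii0 : i = i0 := by
      have hd0 : β0 ∈ Dstep S E (removedUpTo S E (i0 - 1)) := h0lvl
      have hdβ : β ∈ Dstep S E (removedUpTo S E (i - 1)) := hlvl
      rcases le_total i i0 with h | h
      · -- β dies first (or equal); apply sync with β1 := β
        have hb0alive : β0 ∈ (S \ E) \ removedUpTo S E (i - 1) := by
          refine ⟨hA0, ?_⟩
          intro hmem
          obtain ⟨m', hm', hD⟩ := mem_removed.mp hmem
          have : m' = i0 - 1 := stage_unique hD hd0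
          omega
        have := sync hS hsub hβ hmβ hβ0 (i - 1) hdβ hb0alive
        have h1 : i - 1 = i0 - 1 := stage_unique this hd0
        omega
      · have hbalive : β ∈ (S \ E) \ removedUpTo S E (i0 - 1) := by
          refine ⟨hAβ, ?_⟩
          intro hmem
          obtain ⟨m', hm', hD⟩ := mem_removed.mp hmem
          have : m' = i - 1 := stage_unique hD hdβ
          omega
        have := sync hS hsub hβ0 hm0 hβ (i0 - 1) hd0 hbalive
        have h1 : i0 - 1 = i - 1 := stage_unique this hdβ
        omega
    show β ∈ Dlevel S E (N + 1 - (N + 1 - i0))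
    have harith : N + 1 - (N + 1 - i0) = i0 := by omega
    rw [harith, ← hii0]
    exact hlvl
  · refine ⟨0, ?_⟩
    intro β hβ hmβ
    exact absurd ⟨β, hβ, hmβ⟩ hex
end

section
/- Let S ⊆ ℕ^d be a good semigroup and A = A_1 ∪ ... ∪ A_N the complement of a proper good ideal E ⊊ S, partitioned in levels. For every α ∈ A_i with i < N and every coordinate k ∈ {1,...,d}, there exists β ∈ A_{i+1} with β ≥ α and β_k > α_k. -/
open Finset Set

section Aux
variable {d : ℕ}

def mes (c x : Vec d) : ℕ := ∑ j, min (x j) (c j)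

lemma mes_le (c x : Vec d) : mes c x ≤ ∑ j, c j :=
  Finset.sum_le_sum fun j _ => min_le_right _ _

lemma mes_lt (c : Vec d) {x y : Vec d} (hle : x ≤ y) (j : Fin d)
    (h1 : x j < y j) (h2 : x j < c j) : mes c x < mes c y :=
  Finset.sum_lt_sum (fun m _ => min_le_min (hle m) le_rfl)
    ⟨j, Finset.mem_univ j, lt_of_le_of_lt (min_le_left _ _) (lt_min h1 h2)⟩

lemma climb_aux (C : Set (Vec d)) (c : Vec d)
    (hsmall : ∀ a ∈ C, ∃ j, a j < c j) :
    ∀ n, ∀ θ ∈ C, (∑ j, c j) ≤ mes c θ + n → ∃ β ∈ maxLL C, θ ≤ β := by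
  intro n
  induction n with
  | zero =>
    intro θ hθ hb
    by_cases hm : θ ∈ maxLL C
    · exact ⟨θ, hm, le_refl θ⟩
    · exfalso
      have hex : ∃ β ∈ C, llt θ β := by
        by_contra h; push_neg at h
        exact hm ⟨hθ, h⟩
      obtain ⟨β, hβ, hll⟩ := hex
      obtain ⟨j, hj⟩ := hsmall θ hθ
      have h1 : mes c θ < mes c β := mes_lt c (fun i => (hll i).le) j (hll j) hj
      have h2 : mes c β ≤ ∑ j, c j := mes_le c β
      omega
  | succ n ih =>
    intro θ hθ hb
    by_cases hm : θ ∈ maxLL C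
    · exact ⟨θ, hm, le_refl θ⟩
    · have hex : ∃ β ∈ C, llt θ β := by
        by_contra h; push_neg at h
        exact hm ⟨hθ, h⟩
      obtain ⟨β, hβ, hll⟩ := hex
      obtain ⟨j, hj⟩ := hsmall θ hθ
      have h1 : mes c θ < mes c β := mes_lt c (fun i => (hll i).le) j (hll j) hj
      obtain ⟨γ, hγ, hle⟩ := ih β hβ (by omega)
      exact ⟨γ, hγ, le_trans (fun i => (hll i).le) hle⟩

lemma ci_step (S : Set (Vec d)) (B : Set (Vec d)) {θ : Vec d}
    (hci : IsCompleteInfIn S B θ) (j₀ : Fin d) :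
    ∃ β ∈ B, θ ≤ β ∧ θ j₀ < β j₀ := by
  obtain ⟨r, βs, F, hr2, -, hpr, -, hinf⟩ := hci
  have hex : ∃ j : Fin r, j₀ ∉ F j := by
    by_contra h; push_neg at h
    have hle : ({j₀} : Finset (Fin d)) ≤ Finset.univ.inf F :=
      Finset.le_inf fun j _ => Finset.singleton_subset_iff.mpr (h j)
    rw [hinf] at hle
    simpa using hle
  obtain ⟨j, hj⟩ := hex
  obtain ⟨hB, -, -, hΔ⟩ := hpr j
  obtain ⟨-, heqF, hltF⟩ := hΔ
  refine ⟨βs j, hB, ?_, hltF j₀ hj⟩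
  intro m
  by_cases hm : m ∈ F j
  · exact (heqF m hm).ge
  · exact (hltF m hm).le

lemma escape_aux (C : Set (Vec d)) (c : Vec d) (S : Set (Vec d))
    (hsmall : ∀ a ∈ C, ∃ j, a j < c j) :
    ∀ n, ∀ θ ∈ maxLL C, (∑ j, c j) ≤ mes c θ + n →
      ∃ β ∈ maxLL C, ¬ IsCompleteInfIn S (maxLL C) β ∧ θ ≤ β := by
  intro n
  induction n with
  | zero =>
    intro θ hθ hb
    by_cases hci : IsCompleteInfIn S (maxLL C) θ
    · exfalso
      obtain ⟨j₀, hj₀⟩ := hsmall θ hθ.1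
      obtain ⟨β, hβ, hle, hlt⟩ := ci_step S (maxLL C) hci j₀
      have h1 : mes c θ < mes c β := mes_lt c hle j₀ hlt hj₀
      have h2 : mes c β ≤ ∑ j, c j := mes_le c β
      omega
    · exact ⟨θ, hθ, hci, le_refl θ⟩
  | succ n ih =>
    intro θ hθ hb
    by_cases hci : IsCompleteInfIn S (maxLL C) θ
    · obtain ⟨j₀, hj₀⟩ := hsmall θ hθ.1
      obtain ⟨β, hβ, hle, hlt⟩ := ci_step S (maxLL C) hci j₀
      have h1 : mes c θ < mes c β := mes_lt c hle j₀ hlt hj₀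
      obtain ⟨γ, hγ, hγci, hγle⟩ := ih β hβ (by omega)
      exact ⟨γ, hγ, hγci, le_trans hle hγle⟩
    · exact ⟨θ, hθ, hci, le_refl θ⟩

end Aux


theorem stmt7 {d : ℕ} (S E : Set (Vec d)) (hS : IsGoodSemigroup S)
    (hE : IsGoodIdeal S E) (hprop : E ≠ S)
    (N : ℕ) (hN : LevelsTo S E N)
    (i : ℕ) (hi : 1 ≤ i) (hiN : i < N)
    (α : Vec d) (hα : α ∈ Level S E N i) (k : Fin d) :
    ∃ β ∈ Level S E N (i + 1), α ≤ β ∧ α k < β k := by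
  classical
  obtain ⟨c, -, hc⟩ := hE.2.2.2.2
  set R := removedUpTo S E (N - i - 1) with hR
  set C := (S \ E) \ R with hCdef
  have hsmall : ∀ a ∈ C, ∃ j, a j < c j := by
    intro a ha
    by_contra h; push_neg at h
    exact ha.1.2 (hc a h)
  have hL : Level S E N (i + 1) = Dstep S E R := by
    have h2 : N + 1 - (i + 1) - 1 = N - i - 1 := by omega
    unfold Level Dlevel
    rw [h2]
  have hα' : α ∈ Dstep S E (removedUpTo S E ((N - i - 1) + 1)) := by
    have h0 : Level S E N i = Dstep S E (removedUpTo S E (N + 1 - i - 1)) := rfl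
    have h1 : N + 1 - i - 1 = (N - i - 1) + 1 := by omega
    rw [h0, h1] at hα; exact hα
  have hru : removedUpTo S E ((N - i - 1) + 1) = R ∪ Dstep S E R := rfl
  rw [hru] at hα'
  have hαin : α ∈ (S \ E) \ (R ∪ Dstep S E R) := hα'.1.1
  have hαC : α ∈ C := ⟨hαin.1, fun hr => hαin.2 (Or.inl hr)⟩
  have hαnD : α ∉ Dstep S E R := fun hd => hαin.2 (Or.inr hd)
  have hB : (∑ j, c j) ≤ mes c α + ∑ j, c j := Nat.le_add_left _ _
  by_cases hm : α ∈ maxLL C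
  · -- α is maximal in C, hence a complete infimum there
    have hci : IsCompleteInfIn S (maxLL C) α := by
      by_contra hn
      exact hαnD ⟨hm, hn⟩
    obtain ⟨β₁, hβ₁m, hβ₁le, hβ₁k⟩ := ci_step S (maxLL C) hci k
    obtain ⟨β, hβm, hβci, hβle⟩ := escape_aux C c S hsmall (∑ j, c j) β₁ hβ₁m
      (Nat.le_add_left _ _)
    refine ⟨β, ?_, le_trans hβ₁le hβle, lt_of_lt_of_le hβ₁k (hβle k)⟩
    rw [hL]
    exact ⟨hβm, hβci⟩
  · -- α is dominated; climb to a maximal element, then escape the CI set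
    have hex : ∃ θ ∈ C, llt α θ := by
      by_contra h; push_neg at h
      exact hm ⟨hαC, h⟩
    obtain ⟨θ, hθC, hll⟩ := hex
    obtain ⟨β₂, hβ₂m, hβ₂le⟩ := climb_aux C c hsmall (∑ j, c j) θ hθC
      (Nat.le_add_left _ _)
    obtain ⟨β, hβm, hβci, hβle⟩ := escape_aux C c S hsmall (∑ j, c j) β₂ hβ₂m
      (Nat.le_add_left _ _)
    have hθβ : θ ≤ β := le_trans hβ₂le hβle
    refine ⟨β, ?_, le_trans (fun m => (hll m).le) hθβ, lt_of_lt_of_le (hll k) (hθβ k)⟩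
    rw [hL]
    exact ⟨hβm, hβci⟩
end

section
/- Let S ⊆ ℕ^d be a good semigroup and A a symmetric complement of a good ideal E ⊆ S. If β ∈ A and the set Δ̃^E_G(β) is empty for some G ⊆ {1,...,d}, then there exists k ∈ G such that Δ^S_k(γ_E − β) is nonempty. -/
open Finset Set

namespace Stmt10Proof

variable {d : ℕ}

lemma lt_of_min_le' {t : ℤ} {a b e : ℕ} (h : min a b ≤ e) (ha : t < (a : ℤ)) (hb : t < (b : ℤ)) :
    t < (e : ℤ) := by
  rcases le_total a b with hab | hab
  · rw [min_eq_left hab] at h; omega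
  · rw [min_eq_right hab] at h; omega

lemma le_of_min_le' {t : ℤ} {a b e : ℕ} (h : min a b ≤ e) (ha : t ≤ (a : ℤ)) (hb : t ≤ (b : ℤ)) :
    t ≤ (e : ℤ) := by
  rcases le_total a b with hab | hab
  · rw [min_eq_left hab] at h; omega
  · rw [min_eq_right hab] at h; omega

lemma pivot {S : Set (Vec d)}
    (hG2 : ∀ a ∈ S, ∀ b ∈ S, a ≠ b → ∀ i : Fin d, a i = b i →
      ∃ e ∈ S, a i < e i ∧ ∀ j : Fin d, j ≠ i →
        (min (a j) (b j) ≤ e j ∧ (a j ≠ b j → e j = min (a j) (b j))))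
    {a b : Vec d} (ha : a ∈ S) (hb : b ∈ S) {i p : Fin d}
    (hip : p ≠ i) (hi : a i = b i) (hp : a p < b p) :
    ∃ e ∈ S, a i < e i ∧ e p = a p ∧
      ∀ j : Fin d, j ≠ i → min (a j) (b j) ≤ e j := by
  have hab : a ≠ b := fun h => by rw [h] at hp; exact lt_irrefl _ hp
  obtain ⟨e, heS, hei, hej⟩ := hG2 a ha b hb hab i hi
  refine ⟨e, heS, hei, ?_, fun j hj => (hej j hj).1⟩
  have h2 := (hej p hip).2 (Nat.ne_of_lt hp)
  rw [h2, min_eq_left hp.le]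

lemma cascade {S : Set (Vec d)}
    (hG2 : ∀ a ∈ S, ∀ b ∈ S, a ≠ b → ∀ i : Fin d, a i = b i →
      ∃ e ∈ S, a i < e i ∧ ∀ j : Fin d, j ≠ i →
        (min (a j) (b j) ≤ e j ∧ (a j ≠ b j → e j = min (a j) (b j))))
    (V : Fin d → ℤ) (G : Finset (Fin d))
    (ys : ∀ q ∉ G, ∃ y ∈ S, ((y q : ℤ) = V q ∧ ∀ j, j ≠ q → V j < (y j : ℤ)))
    {m : Fin d} (hm : m ∈ G) :
    ∀ (fuel : ℕ) (x : Vec d), x ∈ S →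
      (x m : ℤ) = V m →
      (∀ i ∈ G, i ≠ m → V i < (x i : ℤ)) →
      (∀ q, q ∉ G → V q ≤ (x q : ℤ)) →
      (Finset.univ.filter (fun q => q ∉ G ∧ (x q : ℤ) = V q)).card ≤ fuel →
      ∃ k ∈ G, ∃ θ ∈ S, ((θ k : ℤ) = V k ∧ ∀ j, j ≠ k → V j < (θ j : ℤ)) := by
  intro fuel
  induction fuel using Nat.strong_induction_on with
  | _ fuel ih =>
  intro x hxS hxm hxG hxc hcard
  by_cases hall : ∀ q, q ∉ G → (x q : ℤ) ≠ V q
  · refine ⟨m, hm, x, hxS, hxm, fun j hj => ?_⟩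
    by_cases hjG : j ∈ G
    · exact hxG j hjG hj
    · exact lt_of_le_of_ne (hxc j hjG) (Ne.symm (hall j hjG))
  · push_neg at hall
    obtain ⟨q, hqG, hq⟩ := hall
    obtain ⟨y, hyS, hyq, hyj⟩ := ys q hqG
    have hmq : m ≠ q := fun h => hqG (h ▸ hm)
    have hiq : x q = y q := by
      have : (x q : ℤ) = (y q : ℤ) := hq.trans hyq.symm
      exact_mod_cast this
    have hpm : x m < y m := by
      have h1 : V m < (y m : ℤ) := hyj m hmq
      have : (x m : ℤ) < (y m : ℤ) := by omega
      exact_mod_cast this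
    obtain ⟨e, heS, heq, hem, hemin⟩ := pivot hG2 hxS hyS hmq hiq hpm
    have hqmem : q ∈ Finset.univ.filter (fun q => q ∉ G ∧ (x q : ℤ) = V q) := by
      simp [hqG, hq]
    have hsub : Finset.univ.filter (fun r => r ∉ G ∧ (e r : ℤ) = V r) ⊆
        (Finset.univ.filter (fun r => r ∉ G ∧ (x r : ℤ) = V r)).erase q := by
      intro r hr
      simp only [Finset.mem_filter, Finset.mem_univ, true_and] at hr
      obtain ⟨hrG, hre⟩ := hr
      have hrq : r ≠ q := by
        intro h; subst h
        have : (x r : ℤ) < (e r : ℤ) := by exact_mod_cast heq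
        omega
      refine Finset.mem_erase.mpr ⟨hrq, ?_⟩
      simp only [Finset.mem_filter, Finset.mem_univ, true_and]
      refine ⟨hrG, ?_⟩
      by_contra hxr
      have hxr' : V r < (x r : ℤ) := lt_of_le_of_ne (hxc r hrG) (Ne.symm hxr)
      have hyr' : V r < (y r : ℤ) := hyj r hrq
      have := lt_of_min_le' (hemin r hrq) hxr' hyr'
      omega
    have hcard' : (Finset.univ.filter (fun r => r ∉ G ∧ (e r : ℤ) = V r)).card < fuel := by
      have h1 := Finset.card_le_card hsub
      have h2 := Finset.card_erase_of_mem hqmem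
      have h3 : 1 ≤ (Finset.univ.filter (fun q => q ∉ G ∧ (x q : ℤ) = V q)).card :=
        Finset.card_pos.mpr ⟨q, hqmem⟩
      omega
    refine ih _ hcard' e heS ?_ ?_ ?_ le_rfl
    · rw [hem]; exact hxm
    · intro i hiG hi
      have hiq' : i ≠ q := fun h => hqG (h ▸ hiG)
      exact lt_of_min_le' (hemin i hiq') (hxG i hiG hi) (hyj i hiq')
    · intro r hrG
      by_cases hrq : r = q
      · subst hrq
        have : (x r : ℤ) < (e r : ℤ) := by exact_mod_cast heq
        omega
      · exact le_of_min_le' (hemin r hrq) (hxc r hrG) (le_of_lt (hyj r hrq))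

lemma cleanup {S : Set (Vec d)}
    (hG2 : ∀ a ∈ S, ∀ b ∈ S, a ≠ b → ∀ i : Fin d, a i = b i →
      ∃ e ∈ S, a i < e i ∧ ∀ j : Fin d, j ≠ i →
        (min (a j) (b j) ≤ e j ∧ (a j ≠ b j → e j = min (a j) (b j))))
    (V : Fin d → ℤ) (G : Finset (Fin d)) (B : Fin d → ℕ)
    (hNE : ∀ q ∉ G, ∀ s : ℕ, 1 ≤ s → s ≤ B q →
      ∃ n ∈ S, ((n q : ℤ) = V q - s ∧ (∀ q', q' ∉ G → q' ≠ q → V q' ≤ (n q' : ℤ)) ∧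
        (∀ i ∈ G, V i < (n i : ℤ))))
    (p : Fin d) :
    ∀ (fuel : ℕ) (x : Vec d), x ∈ S →
      ((p ∈ G ∧ (x p : ℤ) = V p) ∨ (p ∉ G ∧ (x p : ℤ) < V p)) →
      (∀ i ∈ G, i ≠ p → V i < (x i : ℤ)) →
      (∀ q, q ∉ G → q ≠ p → V q - B q ≤ (x q : ℤ)) →
      (∑ q ∈ Finset.univ.filter (fun q => q ∉ G ∧ q ≠ p), (V q - (x q : ℤ)).toNat) ≤ fuel →
      ∃ x' ∈ S, (x' p = x p ∧ (∀ i ∈ G, i ≠ p → V i < (x' i : ℤ)) ∧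
        ∀ q, q ∉ G → q ≠ p → V q ≤ (x' q : ℤ)) := by
  intro fuel
  induction fuel using Nat.strong_induction_on with
  | _ fuel ih =>
  intro x hxS hpro hxG hdip hsum
  by_cases hall : ∀ q, q ∉ G → q ≠ p → V q ≤ (x q : ℤ)
  · exact ⟨x, hxS, rfl, hxG, hall⟩
  · push_neg at hall
    obtain ⟨q₁, hq₁G, hq₁p, hq₁⟩ := hall
    set s : ℕ := (V q₁ - (x q₁ : ℤ)).toNat with hs
    have hs1 : 1 ≤ s := by omega
    have hs2 : s ≤ B q₁ := by
      have := hdip q₁ hq₁G hq₁p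
      omega
    obtain ⟨nn, hnS, hnq, hnc, hnG⟩ := hNE q₁ hq₁G s hs1 hs2
    have hxq₁n : x q₁ = nn q₁ := by
      have : (nn q₁ : ℤ) = (x q₁ : ℤ) := by rw [hnq]; omega
      exact_mod_cast this.symm
    have hpq₁ : p ≠ q₁ := fun h => hq₁p h.symm
    have hxpn : x p < nn p := by
      rcases hpro with ⟨hpG, hpx⟩ | ⟨hpG, hpx⟩
      · have h1 := hnG p hpG
        have : (x p : ℤ) < (nn p : ℤ) := by omega
        exact_mod_cast this
      · have h1 := hnc p hpG hpq₁
        have : (x p : ℤ) < (nn p : ℤ) := by omega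
        exact_mod_cast this
    obtain ⟨e, heS, heq₁, hep, hemin⟩ := pivot hG2 hxS hnS hpq₁ hxq₁n hxpn
    have heq₁' : (x q₁ : ℤ) < (e q₁ : ℤ) := by exact_mod_cast heq₁
    have hq₁mem : q₁ ∈ Finset.univ.filter (fun q => q ∉ G ∧ q ≠ p) := by
      simp [hq₁G, hq₁p]
    have hsum' : (∑ q ∈ Finset.univ.filter (fun q => q ∉ G ∧ q ≠ p),
        (V q - (e q : ℤ)).toNat) < fuel := by
      have hlt : (∑ q ∈ Finset.univ.filter (fun q => q ∉ G ∧ q ≠ p),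
          (V q - (e q : ℤ)).toNat) < (∑ q ∈ Finset.univ.filter (fun q => q ∉ G ∧ q ≠ p),
          (V q - (x q : ℤ)).toNat) := by
        apply Finset.sum_lt_sum
        · intro r hr
          simp only [Finset.mem_filter, Finset.mem_univ, true_and] at hr
          obtain ⟨hrG, hrp⟩ := hr
          by_cases hrq : r = q₁
          · subst hrq; omega
          · have h1 := hemin r hrq
            have h2 : V r ≤ (nn r : ℤ) := hnc r hrG hrq
            rcases le_total (x r) (nn r) with hc | hc
            · rw [min_eq_left hc] at h1; omega
            · rw [min_eq_right hc] at h1; omega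
        · exact ⟨q₁, hq₁mem, by omega⟩
      omega
    have hpro' : (p ∈ G ∧ (e p : ℤ) = V p) ∨ (p ∉ G ∧ (e p : ℤ) < V p) := by
      rcases hpro with ⟨hpG, hpx⟩ | ⟨hpG, hpx⟩
      · exact Or.inl ⟨hpG, by rw [hep]; exact hpx⟩
      · exact Or.inr ⟨hpG, by rw [hep]; exact hpx⟩
    have hxG' : ∀ i ∈ G, i ≠ p → V i < (e i : ℤ) := by
      intro i hiG hi
      have hiq' : i ≠ q₁ := fun h => hq₁G (h ▸ hiG)
      exact lt_of_min_le' (hemin i hiq') (hxG i hiG hi) (hnG i hiG)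
    have hdip' : ∀ q, q ∉ G → q ≠ p → V q - B q ≤ (e q : ℤ) := by
      intro r hrG hrp
      by_cases hrq : r = q₁
      · subst hrq
        have := hdip r hrG hrp
        omega
      · exact le_of_min_le' (hemin r hrq) (hdip r hrG hrp)
          (by have := hnc r hrG hrq; omega)
    obtain ⟨x', hx'S, hx'p, hx'G, hx'c⟩ := ih _ hsum' e heS hpro' hxG' hdip' le_rfl
    exact ⟨x', hx'S, by rw [hx'p, hep], hx'G, hx'c⟩

lemma endgame {S : Set (Vec d)}
    (hG2 : ∀ a ∈ S, ∀ b ∈ S, a ≠ b → ∀ i : Fin d, a i = b i →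
      ∃ e ∈ S, a i < e i ∧ ∀ j : Fin d, j ≠ i →
        (min (a j) (b j) ≤ e j ∧ (a j ≠ b j → e j = min (a j) (b j))))
    (V : Fin d → ℤ) (G : Finset (Fin d))
    (ys : ∀ q ∉ G, ∃ y ∈ S, ((y q : ℤ) = V q ∧ ∀ j, j ≠ q → V j < (y j : ℤ)))
    (oracle : ∀ u : Fin d → ℕ, (∀ i ∈ G, u i = 0) → (∃ q, q ∉ G ∧ u q ≠ 0) →
      ∃ θ ∈ S, ∃ k, ((θ k : ℤ) = V k - u k ∧ ∀ j, j ≠ k → V j - u j < (θ j : ℤ)))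
    (hq0 : ∃ q₀, q₀ ∉ G) :
    ∀ (fuel : ℕ) (B : Fin d → ℕ),
      (∀ q ∉ G, B q ≤ (V q).toNat) →
      (∀ q ∉ G, ∀ s : ℕ, 1 ≤ s → s ≤ B q →
        ∃ n ∈ S, ((n q : ℤ) = V q - s ∧ (∀ q', q' ∉ G → q' ≠ q → V q' ≤ (n q' : ℤ)) ∧
          (∀ i ∈ G, V i < (n i : ℤ)))) →
      (∑ q ∈ Finset.univ.filter (· ∉ G), ((V q).toNat - B q)) ≤ fuel →
      ∃ k ∈ G, ∃ θ ∈ S, ((θ k : ℤ) = V k ∧ ∀ j, j ≠ k → V j < (θ j : ℤ)) := by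
  intro fuel
  induction fuel using Nat.strong_induction_on with
  | _ fuel ih =>
  intro B hB hNE hsum
  obtain ⟨q₀, hq₀⟩ := hq0
  set u : Fin d → ℕ := fun q => if q ∈ G then 0 else B q + 1 with hu
  have hu0 : ∀ i ∈ G, u i = 0 := fun i hi => by simp [hu, hi]
  have hu1 : ∃ q, q ∉ G ∧ u q ≠ 0 := ⟨q₀, hq₀, by simp [hu, hq₀]⟩
  obtain ⟨θ, hθS, k, hθk, hθj⟩ := oracle u hu0 hu1
  by_cases hkG : k ∈ G
  · have huk : u k = 0 := hu0 k hkG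
    have hθk' : (θ k : ℤ) = V k := by rw [huk] at hθk; simpa using hθk
    have hpro : (k ∈ G ∧ (θ k : ℤ) = V k) ∨ (k ∉ G ∧ (θ k : ℤ) < V k) := Or.inl ⟨hkG, hθk'⟩
    have hxG : ∀ i ∈ G, i ≠ k → V i < (θ i : ℤ) := by
      intro i hiG hi
      have := hθj i hi
      rw [hu0 i hiG] at this
      simpa using this
    have hdip : ∀ q, q ∉ G → q ≠ k → V q - B q ≤ (θ q : ℤ) := by
      intro q hqG hqk
      have := hθj q hqk
      have huq : u q = B q + 1 := by simp [hu, hqG]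
      rw [huq] at this
      push_cast at this
      omega
    obtain ⟨x', hx'S, hx'p, hx'G, hx'c⟩ := cleanup hG2 V G B hNE k _ θ hθS hpro hxG hdip le_rfl
    have hx'm : (x' k : ℤ) = V k := by rw [hx'p]; exact hθk'
    refine cascade hG2 V G ys hkG _ x' hx'S hx'm hx'G ?_ le_rfl
    intro q hqG
    exact hx'c q hqG (fun h => hqG (h ▸ hkG))
  · have huk : u k = B k + 1 := by simp [hu, hkG]
    have hθk' : (θ k : ℤ) = V k - B k - 1 := by rw [huk] at hθk; push_cast at hθk; omega
    have hVk : 0 ≤ V k := by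
      obtain ⟨y, hyS, hyk, _⟩ := ys k hkG
      have : (0 : ℤ) ≤ (y k : ℤ) := by positivity
      omega
    by_cases hsat : (V k).toNat ≤ B k
    · exfalso
      have h0 : (0 : ℤ) ≤ (θ k : ℤ) := by positivity
      have : ((V k).toNat : ℤ) = V k := Int.toNat_of_nonneg hVk
      omega
    · push_neg at hsat
      have hpro : (k ∈ G ∧ (θ k : ℤ) = V k) ∨ (k ∉ G ∧ (θ k : ℤ) < V k) :=
        Or.inr ⟨hkG, by omega⟩
      have hxG : ∀ i ∈ G, i ≠ k → V i < (θ i : ℤ) := by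
        intro i hiG hi
        have := hθj i hi
        rw [hu0 i hiG] at this
        simpa using this
      have hdip : ∀ q, q ∉ G → q ≠ k → V q - B q ≤ (θ q : ℤ) := by
        intro q hqG hqk
        have := hθj q hqk
        have huq : u q = B q + 1 := by simp [hu, hqG]
        rw [huq] at this
        push_cast at this
        omega
      obtain ⟨x', hx'S, hx'p, hx'G, hx'c⟩ := cleanup hG2 V G B hNE k _ θ hθS hpro hxG hdip le_rfl
      have hx'k : (x' k : ℤ) = V k - (B k + 1) := by
        rw [hx'p]; push_cast; omega
      set B' : Fin d → ℕ := Function.update B k (B k + 1) with hB'def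
      have hB' : ∀ q ∉ G, B' q ≤ (V q).toNat := by
        intro q hqG
        by_cases hqk : q = k
        · subst hqk; simp [hB'def]; omega
        · rw [hB'def, Function.update_of_ne hqk]; exact hB q hqG
      have hNE' : ∀ q ∉ G, ∀ s : ℕ, 1 ≤ s → s ≤ B' q →
          ∃ n ∈ S, ((n q : ℤ) = V q - s ∧ (∀ q', q' ∉ G → q' ≠ q → V q' ≤ (n q' : ℤ)) ∧
            (∀ i ∈ G, V i < (n i : ℤ))) := by
        intro q hqG s hs1 hs2
        by_cases hqk : q = k
        · subst hqk
          rw [hB'def, Function.update_self] at hs2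
          by_cases hsB : s ≤ B q
          · exact hNE q hqG s hs1 hsB
          · have hsk : s = B q + 1 := by omega
            refine ⟨x', hx'S, ?_, ?_, ?_⟩
            · rw [hsk]; push_cast; push_cast at hx'k; omega
            · intro q' hq'G hq'k
              exact hx'c q' hq'G hq'k
            · intro i hiG
              exact hx'G i hiG (fun h => hkG (h ▸ hiG))
        · rw [hB'def, Function.update_of_ne hqk] at hs2
          exact hNE q hqG s hs1 hs2
      have hkmem : k ∈ Finset.univ.filter (· ∉ G) := by simp [hkG]
      have hsum' : (∑ q ∈ Finset.univ.filter (· ∉ G), ((V q).toNat - B' q)) < fuel := by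
        have hlt : (∑ q ∈ Finset.univ.filter (· ∉ G), ((V q).toNat - B' q)) <
            (∑ q ∈ Finset.univ.filter (· ∉ G), ((V q).toNat - B q)) := by
          apply Finset.sum_lt_sum
          · intro r hr
            by_cases hrk : r = k
            · subst hrk; rw [hB'def, Function.update_self]; omega
            · rw [hB'def, Function.update_of_ne hrk]
          · refine ⟨k, hkmem, ?_⟩
            rw [hB'def, Function.update_self]
            omega
        omega
      exact ih _ hsum' B' hB' hNE' le_rfl

lemma query {S E : Set (Vec d)} {c β : Vec d} {G : Finset (Fin d)}
    (hsym1 : ∀ α : Fin d → ℤ,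
      memZ E α ↔ DeltaZ S ((fun j => (c j : ℤ) - 1) - α) = ∅)
    (hG : DeltaTildeF E G β = ∅)
    (u : Fin d → ℕ) (hu0 : ∀ i ∈ G, u i = 0) (hu1 : ∃ q, q ∉ G ∧ u q ≠ 0) :
    ∃ θ ∈ S, ∃ k, ((θ k : ℤ) = ((c k : ℤ) - 1 - (β k : ℤ)) - u k ∧
      ∀ j, j ≠ k → ((c j : ℤ) - 1 - (β j : ℤ)) - u j < (θ j : ℤ)) := by
  set w : Vec d := β + u with hw
  have hwβ : w ≠ β := by
    obtain ⟨q, hqG, hq⟩ := hu1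
    intro h
    have := congrFun h q
    simp only [hw, Pi.add_apply] at this
    omega
  have hwE : w ∉ E := by
    intro hmem
    have hwmem : w ∈ DeltaTildeF E G β := by
      constructor
      · refine ⟨hmem, fun i hi => ?_, fun j hj => ?_⟩
        · simp [hw, Pi.add_apply, hu0 i hi]
        · simp [hw, Pi.add_apply]
      · simpa using hwβ
    rw [hG] at hwmem
    exact hwmem
  have hmz : ¬ memZ E (coeZ w) := by
    rintro ⟨a, haE, hac⟩
    apply hwE
    have ha : a = w := by
      funext j
      have := congrFun hac j
      simp only [coeZ] at this
      exact_mod_cast this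
    exact ha ▸ haE
  have hne : DeltaZ S ((fun j => (c j : ℤ) - 1) - coeZ w) ≠ ∅ :=
    fun h => hmz ((hsym1 _).mpr h)
  obtain ⟨θ, hθ⟩ := Set.nonempty_iff_ne_empty.mpr hne
  obtain ⟨hθS, k, hθk, hθj⟩ := hθ
  have hval : ∀ j, ((fun j => (c j : ℤ) - 1) - coeZ w) j
      = ((c j : ℤ) - 1 - (β j : ℤ)) - u j := by
    intro j
    simp only [Pi.sub_apply, coeZ, hw, Pi.add_apply]
    push_cast
    ring
  refine ⟨θ, hθS, k, ?_, ?_⟩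
  · rw [← hval k]; exact hθk
  · intro j hj
    rw [← hval j]
    exact hθj j hj

end Stmt10Proof
theorem stmt10 {d : ℕ} (S E : Set (Vec d)) (hS : IsGoodSemigroup S)
    (hE : IsGoodIdeal S E) (N : ℕ) (hN : LevelsTo S E N)
    (c : Vec d) (hc : IsConductor E c)
    (hsym : SymComplement S E (fun j => (c j : ℤ) - 1) N)
    (β : Vec d) (hβ : β ∈ S \ E)
    (G : Finset (Fin d)) (hG : DeltaTildeF E G β = ∅) :
    ∃ k ∈ G, (DeltaZk S k ((fun l => (c l : ℤ) - 1) - coeZ β)).Nonempty := by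
  obtain ⟨hlev, hsym1, hsym2⟩ := hsym
  have hG2 := hS.2.2.2.1
  set V : Fin d → ℤ := fun j => (c j : ℤ) - 1 - (β j : ℤ) with hV
  have hVeq : ∀ j, ((fun l => (c l : ℤ) - 1) - coeZ β) j = V j := by
    intro j; simp [hV, coeZ, Pi.sub_apply]
  -- the base case, used whenever G = univ
  have hbase : ∀ G' : Finset (Fin d), (∀ k, k ∈ G') →
      ∃ k ∈ G', ∃ θ ∈ S, ((θ k : ℤ) = V k ∧ ∀ j, j ≠ k → V j < (θ j : ℤ)) := by
    intro G' hall
    have hm : memZ (S \ E) (coeZ β) := ⟨β, hβ, rfl⟩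
    obtain ⟨⟨θ, hθ⟩, _⟩ := (hsym2 (coeZ β)).mp hm
    obtain ⟨hθS, k, hθk, hθj⟩ := hθ
    refine ⟨k, hall k, θ, hθS, ?_, ?_⟩
    · rw [← hVeq k]; exact hθk
    · intro j hj; rw [← hVeq j]; exact hθj j hj
  suffices H : ∀ (n : ℕ) (G' : Finset (Fin d)), (Finset.univ \ G').card ≤ n →
      DeltaTildeF E G' β = ∅ →
      ∃ k ∈ G', ∃ θ ∈ S, ((θ k : ℤ) = V k ∧ ∀ j, j ≠ k → V j < (θ j : ℤ)) by
    obtain ⟨k, hk, θ, hθS, hθk, hθj⟩ := H (Finset.univ \ G).card G le_rfl hG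
    refine ⟨k, hk, θ, hθS, ?_, ?_⟩
    · rw [hVeq k]; exact hθk
    · intro j hj; rw [hVeq j]; exact hθj j hj
  intro n
  induction n with
  | zero =>
    intro G' hcard hG'
    refine hbase G' ?_
    intro k
    by_contra hk
    have hkmem : k ∈ Finset.univ \ G' := by simp [hk]
    have : (Finset.univ \ G').card = 0 := Nat.le_zero.mp hcard
    rw [Finset.card_eq_zero] at this
    rw [this] at hkmem
    exact absurd hkmem (Finset.notMem_empty k)
  | succ n ihn =>
    intro G' hcard hG'
    by_cases huniv : ∀ k, k ∈ G'
    · exact hbase G' huniv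
    · push_neg at huniv
      obtain ⟨q₀, hq₀⟩ := huniv
      by_cases hfull : ∀ q, q ∉ G' →
          ∃ y ∈ S, ((y q : ℤ) = V q ∧ ∀ j, j ≠ q → V j < (y j : ℤ))
      · -- endgame
        have oracle : ∀ u : Fin d → ℕ, (∀ i ∈ G', u i = 0) → (∃ q, q ∉ G' ∧ u q ≠ 0) →
            ∃ θ ∈ S, ∃ k, ((θ k : ℤ) = V k - u k ∧ ∀ j, j ≠ k → V j - u j < (θ j : ℤ)) := by
          intro u hu0 hu1
          exact Stmt10Proof.query hsym1 hG' u hu0 hu1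
        have hNE0 : ∀ q ∉ G', ∀ s : ℕ, 1 ≤ s → s ≤ (0 : Fin d → ℕ) q →
            ∃ nn ∈ S, ((nn q : ℤ) = V q - s ∧
              (∀ q', q' ∉ G' → q' ≠ q → V q' ≤ (nn q' : ℤ)) ∧
              (∀ i ∈ G', V i < (nn i : ℤ))) := by
          intro q _ s hs1 hs2
          simp only [Pi.zero_apply, Nat.le_zero] at hs2
          omega
        exact Stmt10Proof.endgame hG2 V G' hfull oracle ⟨q₀, hq₀⟩ _ 0
          (fun q _ => Nat.zero_le _) hNE0 le_rfl
      · rw [not_forall] at hfull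
        obtain ⟨q, hq⟩ := hfull
        rw [Classical.not_imp] at hq
        obtain ⟨hqG, hqNF⟩ := hq
        have hcard' : (Finset.univ \ insert q G').card ≤ n := by
          have hq : q ∈ Finset.univ \ G' := by simp [hqG]
          have h1 : Finset.univ \ insert q G' = (Finset.univ \ G').erase q := by
            ext r
            simp only [Finset.mem_sdiff, Finset.mem_univ, true_and, Finset.mem_erase,
              Finset.mem_insert]
            tauto
          rw [h1, Finset.card_erase_of_mem hq]
          have h3 : 1 ≤ (Finset.univ \ G').card := Finset.card_pos.mpr ⟨q, hq⟩
          omega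
        have hG'' : DeltaTildeF E (insert q G') β = ∅ := by
          rw [Set.eq_empty_iff_forall_notMem]
          intro θ hθ
          obtain ⟨⟨hθE, hco, hge⟩, hne⟩ := hθ
          have : θ ∈ DeltaTildeF E G' β := by
            refine ⟨⟨hθE, fun i hi => hco i (Finset.mem_insert_of_mem hi),
              fun j hj => ?_⟩, hne⟩
            by_cases hjq : j = q
            · subst hjq
              exact le_of_eq (hco j (Finset.mem_insert_self j G')).symm
            · exact hge j (fun hmem => by
                rcases Finset.mem_insert.mp hmem with h | h
                · exact hjq h
                · exact hj h)
          rw [hG'] at this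
          exact this
        obtain ⟨k, hk, θ, hθS, hθk, hθj⟩ := ihn (insert q G') hcard' hG''
        rcases Finset.mem_insert.mp hk with hkq | hkG
        · subst hkq
          exact absurd (⟨θ, hθS, hθk, hθj⟩ :
            ∃ y ∈ S, ((y k : ℤ) = V k ∧ ∀ j, j ≠ k → V j < (y j : ℤ))) hqNF
        · exact ⟨k, hkG, θ, hθS, hθk, hθj⟩
end

section
/- Let S ⊆ ℕ^2 be a symmetric local good semigroup with minimal nonzero element e, and suppose Δ^S(e) ≠ ∅. Then every absolute element of S belongs to the Apéry set Ap(S, e) = S \ (e + S). -/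
open Finset Set

theorem stmt18 (S : Set (Vec 2)) (hS : IsGoodSemigroup S)
    (hloc : ∀ x ∈ S, (∃ i, x i = 0) → x = 0)
    (c : Vec 2) (hc : IsConductor S c)
    (hsym : ∀ α : Fin 2 → ℤ,
      memZ S α ↔ DeltaZ S ((fun i => (c i : ℤ) - 1) - α) = ∅)
    (e : Vec 2) (he : e ∈ S) (hepos : ∀ i, 0 < e i)
    (hemin : ∀ x ∈ S, (∀ i, 0 < x i) → e ≤ x)
    (hΔ : (DeltaSet S e).Nonempty) :
    ∀ α ∈ S, DeltaSet S α = ∅ → ¬ ∃ s ∈ S, α = e + s := by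
  rintro α hα hΔα ⟨s, hs, rfl⟩
  obtain ⟨θ, hθS, k, hθk, hθj⟩ := hΔ
  have hmem : θ + s ∈ DeltaSet S (e + s) := by
    refine ⟨hS.2.1 θ hθS s hs, k, ?_, ?_⟩
    · simp [Pi.add_apply, hθk]
    · intro j hj
      have := hθj j hj
      simp only [Pi.add_apply]
      omega
  rw [hΔα] at hmem
  exact hmem
end
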